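/- Let (S_n^+), (S_n^-) be complex sequences with ∑ |S_n^±| < ∞, let (g_n^±) ∈ ℓ¹ satisfy the coupled system g_n^± = ∑_{m=1}^∞ (2 S_m^±/(m+n)) g_m^∓, and define g^±(u) = -∑_{m,k} (2 S_m^∓ S_k^±/(m+k)) e^{-ku/2} g_m^±. Then g^± satisfies the homogeneous integral equation g^±(s) - ∫_0^∞ z^±(u+s) g^∓(u) du = 0 for all s ≥ 0, where z^±(t) = ∑_{m=1}^∞ S_m^± e^{-mt/2}. Consequently, if the integral equation has only the trivial solution among functions bounded by C e^{-u/2}, then the algebraic system has only the trivial solution in ℓ¹. -/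

import Mathlib

open MeasureTheory

namespace Stmt5Aux

noncomputable def E (k : ℕ) (u : ℝ) : ℂ := Complex.exp (-(((k : ℂ) + 1) * (u : ℂ)) / 2)

lemma E_eq (k : ℕ) (u : ℝ) : E k u = ((Real.exp (-(((k : ℝ) + 1) * u) / 2) : ℝ) : ℂ) := by
  rw [E, Complex.ofReal_exp]
  congr 1
  push_cast
  ring

lemma norm_E (k : ℕ) (u : ℝ) : ‖E k u‖ = Real.exp (-(((k : ℝ) + 1) * u) / 2) := by
  rw [E_eq, Complex.norm_real, Real.norm_eq_abs, abs_of_pos (Real.exp_pos _)]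

lemma norm_E_le_one (k : ℕ) {u : ℝ} (hu : 0 ≤ u) : ‖E k u‖ ≤ 1 := by
  rw [norm_E]
  calc Real.exp (-(((k : ℝ) + 1) * u) / 2) ≤ Real.exp 0 := by
        apply Real.exp_le_exp.mpr
        have : 0 ≤ ((k : ℝ) + 1) * u := mul_nonneg (by positivity) hu
        linarith
    _ = 1 := Real.exp_zero

lemma norm_E_le_exp (k : ℕ) {u : ℝ} (hu : 0 ≤ u) : ‖E k u‖ ≤ Real.exp (-u / 2) := by
  rw [norm_E]
  apply Real.exp_le_exp.mpr
  have h1 : u ≤ ((k : ℝ) + 1) * u := by nlinarith [Nat.cast_nonneg (α := ℝ) k]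
  linarith

lemma summable_coeff {S g : ℕ → ℂ} (hS : Summable fun n : ℕ => ‖S (n + 1)‖)
    (hg : Summable fun n : ℕ => ‖g (n + 1)‖) :
    Summable fun n : ℕ => ‖S (n + 1) * g (n + 1)‖ := by
  apply Summable.of_nonneg_of_le (fun n => norm_nonneg _) (fun n => ?_)
    (hg.mul_left (∑' n : ℕ, ‖S (n + 1)‖))
  rw [norm_mul]
  exact mul_le_mul_of_nonneg_right (Summable.le_tsum hS n fun j _ => norm_nonneg _) (norm_nonneg _)

lemma summable_pair {A B : ℕ → ℂ} (hA : Summable fun n => ‖A n‖)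
    (hB : Summable fun n => ‖B n‖) (c : ℕ × ℕ → ℂ) (hc : ∀ p, ‖c p‖ ≤ 1) :
    Summable fun p : ℕ × ℕ => A p.1 * B p.2 * c p := by
  apply Summable.of_norm_bounded (g := fun p : ℕ × ℕ => ‖A p.1‖ * ‖B p.2‖)
    (hA.mul_of_nonneg hB (fun _ => norm_nonneg _) fun _ => norm_nonneg _)
  intro p
  calc ‖A p.1 * B p.2 * c p‖ = ‖A p.1‖ * ‖B p.2‖ * ‖c p‖ := by rw [norm_mul, norm_mul]
    _ ≤ ‖A p.1‖ * ‖B p.2‖ * 1 := by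
        apply mul_le_mul_of_nonneg_left (hc p)
        positivity
    _ = ‖A p.1‖ * ‖B p.2‖ := mul_one _

lemma norm_two_div (m k : ℕ) : ‖(2 : ℂ) / (((m : ℂ) + 1) + ((k : ℂ) + 1))‖ ≤ 1 := by
  have hd : (((m : ℂ) + 1) + ((k : ℂ) + 1)) = (((m : ℝ) + (k : ℝ) + 2 : ℝ) : ℂ) := by
    push_cast; ring
  have hpos : (0:ℝ) < (m : ℝ) + (k : ℝ) + 2 := by positivity
  rw [hd, norm_div, Complex.norm_real, Real.norm_eq_abs, abs_of_pos hpos]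
  have h2 : ‖(2 : ℂ)‖ = 2 := by norm_num
  rw [h2, div_le_one hpos]
  have := Nat.cast_nonneg (α := ℝ) m
  have := Nat.cast_nonneg (α := ℝ) k
  linarith

lemma closed_form (S T g h : ℕ → ℂ)
    (hS : Summable fun n : ℕ => ‖S (n + 1)‖)
    (hT : Summable fun n : ℕ => ‖T (n + 1)‖)
    (hg : Summable fun n : ℕ => ‖g (n + 1)‖)
    (heq : ∀ n : ℕ, h (n + 1) =
      ∑' m : ℕ, 2 * S (m + 1) / (((m : ℂ) + 1) + ((n : ℂ) + 1)) * g (m + 1))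
    {u : ℝ} (hu : 0 ≤ u) :
    (∑' m : ℕ, ∑' k : ℕ,
        2 * S (m + 1) * T (k + 1) / (((m : ℂ) + 1) + ((k : ℂ) + 1)) * E k u * g (m + 1))
      = ∑' k : ℕ, T (k + 1) * h (k + 1) * E k u := by
  set F : ℕ × ℕ → ℂ := fun p =>
    2 * S (p.1 + 1) * T (p.2 + 1) / (((p.1 : ℂ) + 1) + ((p.2 : ℂ) + 1)) * E p.2 u * g (p.1 + 1)
    with hF
  have hFsum : Summable F := by
    apply (summable_pair (A := fun n => S (n + 1) * g (n + 1)) (B := fun n => T (n + 1))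
      (summable_coeff hS hg) hT
      (fun p => 2 / (((p.1 : ℂ) + 1) + ((p.2 : ℂ) + 1)) * E p.2 u) ?_).congr
    · intro p
      rw [hF]
      ring
    · intro p
      calc ‖(2 : ℂ) / (((p.1 : ℂ) + 1) + ((p.2 : ℂ) + 1)) * E p.2 u‖
          = ‖(2 : ℂ) / (((p.1 : ℂ) + 1) + ((p.2 : ℂ) + 1))‖ * ‖E p.2 u‖ := norm_mul _ _
        _ ≤ 1 * 1 := mul_le_mul (norm_two_div _ _) (norm_E_le_one _ hu) (norm_nonneg _)
            zero_le_one
        _ = 1 := mul_one _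
  have hswap : (∑' m : ℕ, ∑' k : ℕ, F (m, k)) = ∑' k : ℕ, ∑' m : ℕ, F (m, k) := by
    exact (Summable.tsum_comm' (f := fun m k => F (m, k)) hFsum (fun b => hFsum.prod_factor b)
      (fun c => hFsum.prod_symm.prod_factor c)).symm
  calc (∑' m : ℕ, ∑' k : ℕ,
        2 * S (m + 1) * T (k + 1) / (((m : ℂ) + 1) + ((k : ℂ) + 1)) * E k u * g (m + 1))
      = ∑' k : ℕ, ∑' m : ℕ, F (m, k) := hswap
    _ = ∑' k : ℕ, T (k + 1) * h (k + 1) * E k u := by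
        apply tsum_congr
        intro k
        have h1 : ∀ m : ℕ, F (m, k)
            = (T (k + 1) * E k u) *
              (2 * S (m + 1) / (((m : ℂ) + 1) + ((k : ℂ) + 1)) * g (m + 1)) := by
          intro m; rw [hF]; ring
        rw [tsum_congr h1, tsum_mul_left, ← heq k]
        ring

lemma my_integral_ofReal {f : ℝ → ℝ} {μ : Measure ℝ} :
    ∫ x, ((f x : ℝ) : ℂ) ∂μ = ((∫ x, f x ∂μ : ℝ) : ℂ) :=
  integral_ofReal

lemma integral_exp_neg_mul {c : ℝ} (hc : 0 < c) :
    ∫ u in Set.Ioi (0:ℝ), Real.exp (-c * u) = c⁻¹ := by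
  have h := integral_comp_mul_left_Ioi (fun x => Real.exp (-x)) 0 hc
  simp only [mul_zero, neg_mul] at h ⊢
  rw [h, integral_exp_neg_Ioi]
  simp

lemma E_mul_E (k m : ℕ) (s u : ℝ) :
    E k (u + s) * E m u
      = ((Real.exp (-(((k : ℝ) + 1) * s) / 2)
          * Real.exp (-(((k : ℝ) + (m : ℝ) + 2) / 2) * u) : ℝ) : ℂ) := by
  rw [E_eq, E_eq, ← Complex.ofReal_mul]
  congr 1
  rw [← Real.exp_add, ← Real.exp_add]
  congr 1
  ring

set_option maxHeartbeats 1000000 in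
lemma E_integrable (k m : ℕ) (s : ℝ) :
    IntegrableOn (fun u : ℝ => E k (u + s) * E m u) (Set.Ioi 0) := by
  have hc : (0:ℝ) < ((k : ℝ) + (m : ℝ) + 2) / 2 := by positivity
  have hfun : (fun u : ℝ => E k (u + s) * E m u)
      = fun u : ℝ => ((Real.exp (-(((k : ℝ) + 1) * s) / 2)
          * Real.exp (-(((k : ℝ) + (m : ℝ) + 2) / 2) * u) : ℝ) : ℂ) := by
    funext u; exact E_mul_E k m s u
  rw [hfun]
  have h1 : IntegrableOn (fun u : ℝ => Real.exp (-(((k : ℝ) + 1) * s) / 2)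
      * Real.exp (-(((k : ℝ) + (m : ℝ) + 2) / 2) * u)) (Set.Ioi 0) :=
    (exp_neg_integrableOn_Ioi 0 hc).const_mul _
  exact h1.ofReal

lemma E_integral (k m : ℕ) (s : ℝ) :
    ∫ u in Set.Ioi (0:ℝ), E k (u + s) * E m u
      = 2 / ((k : ℂ) + (m : ℂ) + 2) * E k s := by
  have hc : (0:ℝ) < ((k : ℝ) + (m : ℝ) + 2) / 2 := by positivity
  have hfun : (fun u : ℝ => E k (u + s) * E m u)
      = fun u : ℝ => ((Real.exp (-(((k : ℝ) + 1) * s) / 2)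
          * Real.exp (-(((k : ℝ) + (m : ℝ) + 2) / 2) * u) : ℝ) : ℂ) := by
    funext u; exact E_mul_E k m s u
  rw [hfun, my_integral_ofReal, MeasureTheory.integral_const_mul, integral_exp_neg_mul hc]
  rw [E_eq]
  push_cast
  have hne : ((k : ℂ) + (m : ℂ) + 2) ≠ 0 := by
    have : (((k : ℝ) + (m : ℝ) + 2 : ℝ) : ℂ) ≠ 0 := by
      exact_mod_cast ne_of_gt (by positivity : (0:ℝ) < (k : ℝ) + (m : ℝ) + 2)
    push_cast at this
    exact this
  rw [inv_div]
  ring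

lemma norm_two_div' (k m : ℕ) : ‖(2 : ℂ) / ((k : ℂ) + (m : ℂ) + 2)‖ ≤ 1 := by
  have hd : ((k : ℂ) + (m : ℂ) + 2) = (((k : ℝ) + (m : ℝ) + 2 : ℝ) : ℂ) := by
    push_cast; ring
  have hpos : (0:ℝ) < (k : ℝ) + (m : ℝ) + 2 := by positivity
  rw [hd, norm_div, Complex.norm_real, Real.norm_eq_abs, abs_of_pos hpos]
  have h2 : ‖(2 : ℂ)‖ = 2 := by norm_num
  rw [h2, div_le_one hpos]
  have := Nat.cast_nonneg (α := ℝ) m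
  have := Nat.cast_nonneg (α := ℝ) k
  linarith

lemma summable_norm_mul_E {c : ℕ → ℂ} (hc : Summable fun n : ℕ => ‖c n‖)
    {t : ℝ} (ht : 0 ≤ t) : Summable fun k : ℕ => ‖c k * E k t‖ := by
  apply Summable.of_nonneg_of_le (fun _ => norm_nonneg _) (fun k => ?_) hc
  rw [norm_mul]
  calc ‖c k‖ * ‖E k t‖ ≤ ‖c k‖ * 1 :=
        mul_le_mul_of_nonneg_left (norm_E_le_one k ht) (norm_nonneg _)
    _ = ‖c k‖ := mul_one _

lemma key (a b c : ℕ → ℂ)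
    (hb : Summable fun n : ℕ => ‖b n‖) (hc : Summable fun n : ℕ => ‖c n‖)
    (hrel : ∀ k : ℕ, a k = c k * ∑' m : ℕ, 2 * b m / (((m : ℂ) + 1) + ((k : ℂ) + 1)))
    {s : ℝ} (hs : 0 ≤ s) :
    ∫ u in Set.Ioi (0:ℝ), (∑' k : ℕ, c k * E k (u + s)) * (-∑' m : ℕ, b m * E m u)
      = -∑' k : ℕ, a k * E k s := by
  have hint : ∀ p : ℕ × ℕ, IntegrableOn
      (fun u : ℝ => c p.1 * E p.1 (u + s) * (b p.2 * E p.2 u)) (Set.Ioi 0) := by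
    intro p
    have hfun : (fun u : ℝ => c p.1 * E p.1 (u + s) * (b p.2 * E p.2 u))
        = fun u : ℝ => (c p.1 * b p.2) * (E p.1 (u + s) * E p.2 u) := by
      funext u; ring
    rw [hfun]
    exact (E_integrable p.1 p.2 s).const_mul _
  have hGnorm : ∀ p : ℕ × ℕ,
      (∫ u in Set.Ioi (0:ℝ), ‖c p.1 * E p.1 (u + s) * (b p.2 * E p.2 u)‖)
        ≤ ‖c p.1‖ * ‖b p.2‖ := by
    intro p
    have hb1 : IntegrableOn (fun u : ℝ => ‖c p.1‖ * ‖b p.2‖ * Real.exp (-1 * u))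
        (Set.Ioi 0) := (exp_neg_integrableOn_Ioi 0 one_pos).const_mul _
    have hle : ∀ u ∈ Set.Ioi (0:ℝ), ‖c p.1 * E p.1 (u + s) * (b p.2 * E p.2 u)‖
        ≤ ‖c p.1‖ * ‖b p.2‖ * Real.exp (-1 * u) := by
      intro u hu
      have hu' : (0:ℝ) ≤ u := le_of_lt hu
      have h1 : ‖E p.1 (u + s)‖ ≤ Real.exp (-u / 2) := by
        calc ‖E p.1 (u + s)‖ ≤ Real.exp (-(u + s) / 2) := norm_E_le_exp _ (by linarith)
          _ ≤ Real.exp (-u / 2) := Real.exp_le_exp.mpr (by linarith)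
      have h2 : ‖E p.2 u‖ ≤ Real.exp (-u / 2) := norm_E_le_exp _ hu'
      calc ‖c p.1 * E p.1 (u + s) * (b p.2 * E p.2 u)‖
          = ‖c p.1‖ * ‖E p.1 (u + s)‖ * (‖b p.2‖ * ‖E p.2 u‖) := by
            rw [norm_mul, norm_mul, norm_mul]
        _ ≤ ‖c p.1‖ * Real.exp (-u / 2) * (‖b p.2‖ * Real.exp (-u / 2)) := by
            gcongr
        _ = ‖c p.1‖ * ‖b p.2‖ * (Real.exp (-u / 2) * Real.exp (-u / 2)) := by ring
        _ = ‖c p.1‖ * ‖b p.2‖ * Real.exp (-1 * u) := by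
            rw [← Real.exp_add]
            congr 1
            ring
    calc (∫ u in Set.Ioi (0:ℝ), ‖c p.1 * E p.1 (u + s) * (b p.2 * E p.2 u)‖)
        ≤ ∫ u in Set.Ioi (0:ℝ), ‖c p.1‖ * ‖b p.2‖ * Real.exp (-1 * u) :=
          setIntegral_mono_on ((hint p).norm) hb1 measurableSet_Ioi hle
      _ = ‖c p.1‖ * ‖b p.2‖ * ∫ u in Set.Ioi (0:ℝ), Real.exp (-1 * u) :=
          MeasureTheory.integral_const_mul _ _
      _ = ‖c p.1‖ * ‖b p.2‖ := by rw [integral_exp_neg_mul one_pos]; simp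
  have hsum_int : Summable fun p : ℕ × ℕ =>
      ∫ u in Set.Ioi (0:ℝ), ‖c p.1 * E p.1 (u + s) * (b p.2 * E p.2 u)‖ :=
    Summable.of_nonneg_of_le
      (fun p => integral_nonneg fun u => norm_nonneg _) hGnorm
      (hc.mul_of_nonneg hb (fun _ => norm_nonneg _) fun _ => norm_nonneg _)
  have hintegrand : Set.EqOn
      (fun u : ℝ => (∑' k : ℕ, c k * E k (u + s)) * (-∑' m : ℕ, b m * E m u))
      (fun u : ℝ => -∑' p : ℕ × ℕ, c p.1 * E p.1 (u + s) * (b p.2 * E p.2 u))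
      (Set.Ioi 0) := by
    intro u hu
    have hu' : (0:ℝ) ≤ u := le_of_lt hu
    simp only
    rw [mul_neg, tsum_mul_tsum_of_summable_norm
      (summable_norm_mul_E hc (by linarith : (0:ℝ) ≤ u + s)) (summable_norm_mul_E hb hu')]
  rw [setIntegral_congr_fun measurableSet_Ioi hintegrand, integral_neg,
    ← integral_tsum_of_summable_integral_norm hint hsum_int]
  congr 1
  have hval : ∀ p : ℕ × ℕ, (∫ u in Set.Ioi (0:ℝ), c p.1 * E p.1 (u + s) * (b p.2 * E p.2 u))
      = c p.1 * b p.2 * (2 / ((p.1 : ℂ) + (p.2 : ℂ) + 2) * E p.1 s) := by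
    intro p
    have hfun : (fun u : ℝ => c p.1 * E p.1 (u + s) * (b p.2 * E p.2 u))
        = fun u : ℝ => (c p.1 * b p.2) * (E p.1 (u + s) * E p.2 u) := by funext u; ring
    rw [hfun, MeasureTheory.integral_const_mul, E_integral]
  rw [tsum_congr hval]
  have hsum2 : Summable fun p : ℕ × ℕ =>
      c p.1 * b p.2 * (2 / ((p.1 : ℂ) + (p.2 : ℂ) + 2) * E p.1 s) := by
    apply summable_pair hc hb (fun p => 2 / ((p.1 : ℂ) + (p.2 : ℂ) + 2) * E p.1 s)
    intro p
    calc ‖(2 : ℂ) / ((p.1 : ℂ) + (p.2 : ℂ) + 2) * E p.1 s‖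
        = ‖(2 : ℂ) / ((p.1 : ℂ) + (p.2 : ℂ) + 2)‖ * ‖E p.1 s‖ := norm_mul _ _
      _ ≤ 1 * 1 := mul_le_mul (norm_two_div' _ _) (norm_E_le_one _ hs) (norm_nonneg _)
          zero_le_one
      _ = 1 := mul_one _
  rw [Summable.tsum_prod' hsum2 (fun k => hsum2.prod_factor k)]
  apply tsum_congr
  intro k
  have h1 : ∀ m : ℕ, c k * b m * (2 / ((k : ℂ) + (m : ℂ) + 2) * E k s)
      = (c k * E k s) * (2 * b m / (((m : ℂ) + 1) + ((k : ℂ) + 1))) := by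
    intro m; ring
  rw [tsum_congr h1, tsum_mul_left, hrel k]
  ring

open Filter Topology in
lemma dirichlet_zero (a : ℕ → ℂ) (ha : Summable fun n : ℕ => ‖a n‖)
    (h : ∀ u : ℝ, 0 ≤ u → ∑' k : ℕ, a k * E k u = 0) : ∀ k, a k = 0 := by
  intro n
  induction n using Nat.strong_induction_on with
  | _ n IH =>
  set f : ℝ → ℕ → ℂ := fun u k => a k * Complex.exp ((((n : ℂ) - (k : ℂ)) * (u : ℂ)) / 2)
    with hf
  set g : ℕ → ℂ := fun k => if k = n then a n else 0 with hg
  have hzero : ∀ u : ℝ, 0 ≤ u → ∑' k, f u k = 0 := by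
    intro u hu
    have h1 : ∀ k : ℕ, f u k
        = Complex.exp ((((n : ℂ) + 1) * (u : ℂ)) / 2) * (a k * E k u) := by
      intro k
      have hE : Complex.exp ((((n : ℂ) + 1) * (u : ℂ)) / 2) * E k u
          = Complex.exp ((((n : ℂ) - (k : ℂ)) * (u : ℂ)) / 2) := by
        rw [E, ← Complex.exp_add]
        congr 1
        ring
      show a k * Complex.exp ((((n : ℂ) - (k : ℂ)) * (u : ℂ)) / 2)
          = Complex.exp ((((n : ℂ) + 1) * (u : ℂ)) / 2) * (a k * E k u)
      rw [mul_left_comm, hE]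
    rw [tsum_congr h1, tsum_mul_left, h u hu, mul_zero]
  have hbound : Summable fun k : ℕ => if k < n then (0:ℝ) else ‖a k‖ := by
    apply Summable.of_nonneg_of_le (fun k => ?_) (fun k => ?_) ha
    · split <;> simp [norm_nonneg]
    · split <;> simp [norm_nonneg]
  have htends : Tendsto (fun u : ℝ => ∑' k, f u k) atTop (𝓝 (∑' k, g k)) := by
    apply tendsto_tsum_of_dominated_convergence hbound
    · intro k
      rcases lt_trichotomy k n with hk | hk | hk
      · have : ∀ u : ℝ, f u k = 0 := by
          intro u; rw [hf]; simp [IH k hk]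
        simp only [this, hg, if_neg (Nat.ne_of_lt hk)]
        exact tendsto_const_nhds
      · subst hk
        have : ∀ u : ℝ, f u k = a k := by
          intro u; rw [hf]; simp
        simp only [this, hg, if_pos rfl]
        exact tendsto_const_nhds
      · have hne : k ≠ n := Nat.ne_of_gt hk
        simp only [hg, if_neg hne]
        rw [tendsto_zero_iff_norm_tendsto_zero]
        have hnorm : ∀ u : ℝ, ‖f u k‖ = ‖a k‖ * Real.exp (-(((k : ℝ) - n) / 2) * u) := by
          intro u
          rw [hf]
          simp only [norm_mul]
          congr 1
          have harg : (((n : ℂ) - (k : ℂ)) * (u : ℂ)) / 2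
              = ((-(((k : ℝ) - n) / 2) * u : ℝ) : ℂ) := by push_cast; ring
          rw [harg, ← Complex.ofReal_exp, Complex.norm_real, Real.norm_eq_abs,
            abs_of_pos (Real.exp_pos _)]
        simp only [hnorm]
        rw [show (0:ℝ) = ‖a k‖ * 0 by ring]
        apply Tendsto.const_mul
        have hpos : (0:ℝ) < ((k : ℝ) - n) / 2 := by
          have : (n : ℝ) < k := by exact_mod_cast hk
          linarith
        have := Real.tendsto_exp_neg_atTop_nhds_zero.comp
          (Tendsto.const_mul_atTop hpos tendsto_id)
        apply this.congr
        intro u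
        simp [neg_mul, Function.comp]
    · filter_upwards [eventually_ge_atTop (0:ℝ)] with u hu
      intro k
      by_cases hk : k < n
      · simp only [hf, IH k hk, if_pos hk, zero_mul, norm_zero, le_refl]
      · simp only [if_neg hk]
        push_neg at hk
        rw [hf]
        simp only [norm_mul]
        have harg : (((n : ℂ) - (k : ℂ)) * (u : ℂ)) / 2
            = ((((n : ℝ) - k) * u / 2 : ℝ) : ℂ) := by push_cast; ring
        rw [harg, ← Complex.ofReal_exp, Complex.norm_real, Real.norm_eq_abs,
          abs_of_pos (Real.exp_pos _)]
        have hkn : (n : ℝ) ≤ (k : ℝ) := by exact_mod_cast hk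
        calc ‖a k‖ * Real.exp (((n : ℝ) - k) * u / 2)
            ≤ ‖a k‖ * 1 := by
              apply mul_le_mul_of_nonneg_left _ (norm_nonneg _)
              rw [show (1:ℝ) = Real.exp 0 by simp]
              apply Real.exp_le_exp.mpr
              nlinarith
          _ = ‖a k‖ := mul_one _
  have hconst : Tendsto (fun u : ℝ => ∑' k, f u k) atTop (𝓝 0) := by
    apply Tendsto.congr' _ tendsto_const_nhds
    filter_upwards [eventually_ge_atTop (0:ℝ)] with u hu
    exact (hzero u hu).symm
  have : (∑' k, g k) = 0 := tendsto_nhds_unique htends hconst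
  rwa [hg, tsum_ite_eq] at this

end Stmt5Aux

open Stmt5Aux in
/-- If `(g_n^±) ∈ ℓ¹` solves the coupled system, then
`g^±(u) = -∑_{m,k} (2 S_m^∓ S_k^±/(m+k)) e^{-ku/2} g_m^±` solves the homogeneous Marchenko
equation `g^±(s) = ∫_0^∞ z^±(u+s) g^∓(u) du`; consequently, if that integral equation has
only the trivial solution among functions bounded by `C e^{-u/2}`, the algebraic system has
only the trivial solution in `ℓ¹`. -/
theorem stmt5 (Sp Sm gp gm : ℕ → ℂ)
    (hSp : Summable fun n : ℕ => ‖Sp (n + 1)‖)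
    (hSm : Summable fun n : ℕ => ‖Sm (n + 1)‖)
    (hgp : Summable fun n : ℕ => ‖gp (n + 1)‖)
    (hgm : Summable fun n : ℕ => ‖gm (n + 1)‖)
    (heqp : ∀ n : ℕ, gp (n + 1) =
      ∑' m : ℕ, 2 * Sp (m + 1) / (((m : ℂ) + 1) + ((n : ℂ) + 1)) * gm (m + 1))
    (heqm : ∀ n : ℕ, gm (n + 1) =
      ∑' m : ℕ, 2 * Sm (m + 1) / (((m : ℂ) + 1) + ((n : ℂ) + 1)) * gp (m + 1))
    (zp zm Gp Gm : ℝ → ℂ)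
    (hzp : ∀ t : ℝ, zp t = ∑' m : ℕ, Sp (m + 1) * Complex.exp (-(((m : ℂ) + 1) * (t : ℂ)) / 2))
    (hzm : ∀ t : ℝ, zm t = ∑' m : ℕ, Sm (m + 1) * Complex.exp (-(((m : ℂ) + 1) * (t : ℂ)) / 2))
    (hGp : ∀ u : ℝ, Gp u =
      -∑' m : ℕ, ∑' k : ℕ,
        2 * Sm (m + 1) * Sp (k + 1) / (((m : ℂ) + 1) + ((k : ℂ) + 1))
          * Complex.exp (-(((k : ℂ) + 1) * (u : ℂ)) / 2) * gp (m + 1))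
    (hGm : ∀ u : ℝ, Gm u =
      -∑' m : ℕ, ∑' k : ℕ,
        2 * Sp (m + 1) * Sm (k + 1) / (((m : ℂ) + 1) + ((k : ℂ) + 1))
          * Complex.exp (-(((k : ℂ) + 1) * (u : ℂ)) / 2) * gm (m + 1)) :
    ((∀ s : ℝ, 0 ≤ s →
        Gp s - ∫ u in Set.Ioi (0 : ℝ), zp (u + s) * Gm u = 0) ∧
     (∀ s : ℝ, 0 ≤ s →
        Gm s - ∫ u in Set.Ioi (0 : ℝ), zm (u + s) * Gp u = 0)) ∧
    ((∀ fp fm : ℝ → ℂ,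
        (∃ C : ℝ, ∀ u : ℝ, 0 ≤ u →
          ‖fp u‖ ≤ C * Real.exp (-u / 2) ∧ ‖fm u‖ ≤ C * Real.exp (-u / 2)) →
        (∀ s : ℝ, 0 ≤ s →
          fp s - ∫ u in Set.Ioi (0 : ℝ), zp (u + s) * fm u = 0) →
        (∀ s : ℝ, 0 ≤ s →
          fm s - ∫ u in Set.Ioi (0 : ℝ), zm (u + s) * fp u = 0) →
        ∀ u : ℝ, 0 ≤ u → fp u = 0 ∧ fm u = 0) →
      ∀ n : ℕ, gp (n + 1) = 0 ∧ gm (n + 1) = 0) := by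
  have ha' : Summable fun n : ℕ => ‖Sp (n + 1) * gm (n + 1)‖ := summable_coeff hSp hgm
  have hb' : Summable fun n : ℕ => ‖Sm (n + 1) * gp (n + 1)‖ := summable_coeff hSm hgp
  -- closed forms
  have hGp' : ∀ {u : ℝ}, 0 ≤ u → Gp u = -∑' k : ℕ, Sp (k + 1) * gm (k + 1) * E k u := by
    intro u hu
    rw [hGp u]
    congr 1
    exact closed_form Sm Sp gp gm hSm hSp hgp heqm hu
  have hGm' : ∀ {u : ℝ}, 0 ≤ u → Gm u = -∑' k : ℕ, Sm (k + 1) * gp (k + 1) * E k u := by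
    intro u hu
    rw [hGm u]
    congr 1
    exact closed_form Sp Sm gm gp hSp hSm hgm heqp hu
  -- relations
  have hrelp : ∀ k : ℕ, Sp (k + 1) * gm (k + 1)
      = Sp (k + 1) * ∑' m : ℕ, 2 * (Sm (m + 1) * gp (m + 1))
          / (((m : ℂ) + 1) + ((k : ℂ) + 1)) := by
    intro k
    rw [heqm k]
    congr 1
    apply tsum_congr
    intro m
    ring
  have hrelm : ∀ k : ℕ, Sm (k + 1) * gp (k + 1)
      = Sm (k + 1) * ∑' m : ℕ, 2 * (Sp (m + 1) * gm (m + 1))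
          / (((m : ℂ) + 1) + ((k : ℂ) + 1)) := by
    intro k
    rw [heqp k]
    congr 1
    apply tsum_congr
    intro m
    ring
  -- part one, plus direction
  have part1p : ∀ s : ℝ, 0 ≤ s →
      Gp s - ∫ u in Set.Ioi (0 : ℝ), zp (u + s) * Gm u = 0 := by
    intro s hs
    have hintegrand : Set.EqOn (fun u : ℝ => zp (u + s) * Gm u)
        (fun u : ℝ => (∑' k : ℕ, Sp (k + 1) * E k (u + s))
          * (-∑' m : ℕ, Sm (m + 1) * gp (m + 1) * E m u)) (Set.Ioi 0) := by
      intro u hu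
      simp only
      rw [hzp (u + s), hGm' (le_of_lt hu)]
      rfl
    have hkey := key (fun k => Sp (k + 1) * gm (k + 1)) (fun m => Sm (m + 1) * gp (m + 1))
      (fun k => Sp (k + 1)) hb' hSp hrelp hs
    rw [setIntegral_congr_fun measurableSet_Ioi hintegrand, hkey, hGp' hs, sub_self]
  have part1m : ∀ s : ℝ, 0 ≤ s →
      Gm s - ∫ u in Set.Ioi (0 : ℝ), zm (u + s) * Gp u = 0 := by
    intro s hs
    have hintegrand : Set.EqOn (fun u : ℝ => zm (u + s) * Gp u)
        (fun u : ℝ => (∑' k : ℕ, Sm (k + 1) * E k (u + s))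
          * (-∑' m : ℕ, Sp (m + 1) * gm (m + 1) * E m u)) (Set.Ioi 0) := by
      intro u hu
      simp only
      rw [hzm (u + s), hGp' (le_of_lt hu)]
      rfl
    have hkey := key (fun k => Sm (k + 1) * gp (k + 1)) (fun m => Sp (m + 1) * gm (m + 1))
      (fun k => Sm (k + 1)) ha' hSm hrelm hs
    rw [setIntegral_congr_fun measurableSet_Ioi hintegrand, hkey, hGm' hs, sub_self]
  refine ⟨⟨part1p, part1m⟩, ?_⟩
  -- part two
  intro H n
  set C : ℝ := (∑' k : ℕ, ‖Sp (k + 1) * gm (k + 1)‖)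
    + ∑' k : ℕ, ‖Sm (k + 1) * gp (k + 1)‖ with hC
  have hCa : (∑' k : ℕ, ‖Sp (k + 1) * gm (k + 1)‖) ≤ C := by
    have : (0:ℝ) ≤ ∑' k : ℕ, ‖Sm (k + 1) * gp (k + 1)‖ :=
      tsum_nonneg fun _ => norm_nonneg _
    rw [hC]; linarith
  have hCb : (∑' k : ℕ, ‖Sm (k + 1) * gp (k + 1)‖) ≤ C := by
    have : (0:ℝ) ≤ ∑' k : ℕ, ‖Sp (k + 1) * gm (k + 1)‖ :=
      tsum_nonneg fun _ => norm_nonneg _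
    rw [hC]; linarith
  have hbd : ∀ (c : ℕ → ℂ), Summable (fun n : ℕ => ‖c n‖) → ∀ {u : ℝ}, 0 ≤ u →
      ‖-∑' k : ℕ, c k * E k u‖ ≤ (∑' k : ℕ, ‖c k‖) * Real.exp (-u / 2) := by
    intro c hc u hu
    rw [norm_neg]
    calc ‖∑' k : ℕ, c k * E k u‖ ≤ ∑' k : ℕ, ‖c k * E k u‖ :=
          norm_tsum_le_tsum_norm (summable_norm_mul_E hc hu)
      _ ≤ ∑' k : ℕ, ‖c k‖ * Real.exp (-u / 2) := by
          apply Summable.tsum_le_tsum _ (summable_norm_mul_E hc hu) (hc.mul_right _)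
          intro k
          rw [norm_mul]
          exact mul_le_mul_of_nonneg_left (norm_E_le_exp k hu) (norm_nonneg _)
      _ = (∑' k : ℕ, ‖c k‖) * Real.exp (-u / 2) := tsum_mul_right
  have hGzero := H Gp Gm ⟨C, ?_⟩ part1p part1m
  · have hA : ∀ k : ℕ, Sp (k + 1) * gm (k + 1) = 0 := by
      apply dirichlet_zero _ ha'
      intro u hu
      have h0 := (hGzero u hu).1
      rw [hGp' hu] at h0
      exact neg_eq_zero.mp h0
    have hB : ∀ k : ℕ, Sm (k + 1) * gp (k + 1) = 0 := by
      apply dirichlet_zero _ hb'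
      intro u hu
      have h0 := (hGzero u hu).2
      rw [hGm' hu] at h0
      exact neg_eq_zero.mp h0
    constructor
    · rw [heqp n]
      have hterm : ∀ m : ℕ, 2 * Sp (m + 1) / (((m : ℂ) + 1) + ((n : ℂ) + 1)) * gm (m + 1)
          = (0 : ℂ) := by
        intro m
        calc 2 * Sp (m + 1) / (((m : ℂ) + 1) + ((n : ℂ) + 1)) * gm (m + 1)
            = 2 / (((m : ℂ) + 1) + ((n : ℂ) + 1)) * (Sp (m + 1) * gm (m + 1)) := by ring
          _ = 0 := by rw [hA m, mul_zero]
      rw [tsum_congr hterm]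
      exact tsum_zero
    · rw [heqm n]
      have hterm : ∀ m : ℕ, 2 * Sm (m + 1) / (((m : ℂ) + 1) + ((n : ℂ) + 1)) * gp (m + 1)
          = (0 : ℂ) := by
        intro m
        calc 2 * Sm (m + 1) / (((m : ℂ) + 1) + ((n : ℂ) + 1)) * gp (m + 1)
            = 2 / (((m : ℂ) + 1) + ((n : ℂ) + 1)) * (Sm (m + 1) * gp (m + 1)) := by ring
          _ = 0 := by rw [hB m, mul_zero]
      rw [tsum_congr hterm]
      exact tsum_zero
  · intro u hu
    constructor
    · rw [hGp' hu]
      calc ‖-∑' k : ℕ, Sp (k + 1) * gm (k + 1) * E k u‖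
          ≤ (∑' k : ℕ, ‖Sp (k + 1) * gm (k + 1)‖) * Real.exp (-u / 2) := hbd _ ha' hu
        _ ≤ C * Real.exp (-u / 2) :=
            mul_le_mul_of_nonneg_right hCa (Real.exp_nonneg _)
    · rw [hGm' hu]
      calc ‖-∑' k : ℕ, Sm (k + 1) * gp (k + 1) * E k u‖
          ≤ (∑' k : ℕ, ‖Sm (k + 1) * gp (k + 1)‖) * Real.exp (-u / 2) := hbd _ hb' hu
        _ ≤ C * Real.exp (-u / 2) :=
            mul_le_mul_of_nonneg_right hCb (Real.exp_nonneg _)
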